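/- Let g, G : ℝ → ℝ be differentiable with g'(s) ≥ 0 for all s ∈ ℝ and G'(s) = g'(s)·s for all s ∈ ℝ. Then for all a, b ∈ ℝ it holds (g(a) − g(b))·a ≥ G(a) − G(b). -/

import Mathlib

/-- Estimate for the bulk free energy term in the discrete energy inequality:
if `g' ≥ 0` and `G'(s) = g'(s)·s`, then `(g(a) - g(b))·a ≥ G(a) - G(b)`. -/
theorem bulk_energy_estimate (g G : ℝ → ℝ)
    (hg : Differentiable ℝ g) (hG : Differentiable ℝ G)
    (hg' : ∀ s : ℝ, 0 ≤ deriv g s)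
    (hGg : ∀ s : ℝ, deriv G s = deriv g s * s) :
    ∀ a b : ℝ, (g a - g b) * a ≥ G a - G b := by
  intro a b
  set H : ℝ → ℝ := fun s => G s - g s * a with hH
  have hHd : Differentiable ℝ H := hG.sub (hg.mul_const a)
  have hderiv : ∀ s, deriv H s = deriv g s * (s - a) := by
    intro s
    have : deriv H s = deriv G s - deriv g s * a := by
      rw [hH]
      rw [deriv_fun_sub (hG s) ((hg s).mul_const a),
        deriv_mul_const (hg s)]
    rw [this, hGg s]; ring
  have key : H a ≤ H b := by
    rcases le_total b a with hba | hab
    · have : AntitoneOn H (Set.Icc b a) := by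
        apply antitoneOn_of_deriv_nonpos (convex_Icc b a) hHd.continuous.continuousOn
          (fun x _ => (hHd x).differentiableWithinAt)
        intro x hx
        rw [hderiv]
        exact mul_nonpos_of_nonneg_of_nonpos (hg' x)
          (sub_nonpos.mpr (le_of_lt (Set.mem_Ioo.mp (by simpa using hx)).2))
      exact this (Set.left_mem_Icc.mpr hba) (Set.right_mem_Icc.mpr hba) hba
    · have : MonotoneOn H (Set.Icc a b) := by
        apply monotoneOn_of_deriv_nonneg (convex_Icc a b) hHd.continuous.continuousOn
          (fun x _ => (hHd x).differentiableWithinAt)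
        intro x hx
        rw [hderiv]
        exact mul_nonneg (hg' x)
          (sub_nonneg.mpr (le_of_lt (Set.mem_Ioo.mp (by simpa using hx)).1))
      exact this (Set.left_mem_Icc.mpr hab) (Set.right_mem_Icc.mpr hab) hab
  have : G a - g a * a ≤ G b - g b * a := key
  linarith
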